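/- arXiv:1905.06635 — 5 statements merged into one kernel-verified Lean document; each statement's English description precedes it below -/
import Mathlib

section
/- Bound on the submodularity index via the optimal value: let F : Finset V → ℝ be a nonnegative set function on a finite set V and let C ⊆ V be a maximizer of F over all subsets of V. Then −2·F(C) ≤ λ_F(V, 2) ≤ 2·F(C). -/
open Finset

variable {V : Type*} [Fintype V] [DecidableEq V]

/-- The marginal gain `F_S(A) = F(A ∪ S) − F(A)` generalizes `F_x(A)` via `S = {x}`.
The submodularity index (SmI) of `F` for a set `L ⊆ V` and cardinality `k` is the
minimum of `∑ x ∈ S, F_x(A) − F_S(A)` over all pairs `(S, A)` with `A ⊆ L`,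
`S ∩ A = ∅`, and `|S| ≤ k`. -/
noncomputable def smI (F : Finset V → ℝ) (L : Finset V) (k : ℕ) : ℝ :=
  (Finset.univ.filter (fun p : Finset V × Finset V =>
      p.2 ⊆ L ∧ p.1 ∩ p.2 = ∅ ∧ p.1.card ≤ k)).inf'
    ⟨(∅, ∅), by simp⟩
    (fun p => (∑ x ∈ p.1, (F (p.2 ∪ {x}) - F p.2)) - (F (p.2 ∪ p.1) - F p.2))

/-- Bound on the submodularity index via the optimal value: if `F` is nonnegative and
`C` maximizes `F` over all subsets of `V`, then `−2 F(C) ≤ λ_F(V, 2) ≤ 2 F(C)`. -/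
theorem smI_bound_by_optimal (F : Finset V → ℝ)
    (hF : ∀ A : Finset V, 0 ≤ F A)
    (C : Finset V) (hC : ∀ A : Finset V, F A ≤ F C) :
    -2 * F C ≤ smI F Finset.univ 2 ∧ smI F Finset.univ 2 ≤ 2 * F C := by
  constructor
  · apply Finset.le_inf'
    intro p hp
    simp only [Finset.mem_filter] at hp
    obtain ⟨-, -, -, hcard⟩ := hp
    interval_cases h : p.1.card
    · rw [Finset.card_eq_zero] at h
      simp [h]
      linarith [hF C]
    · rw [Finset.card_eq_one] at h
      obtain ⟨x, hx⟩ := h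
      simp [hx]
      linarith [hF C]
    · rw [Finset.card_eq_two] at h
      obtain ⟨x, y, hxy, hx⟩ := h
      rw [hx, Finset.sum_pair hxy]
      have := hF (p.2 ∪ {x})
      have := hF (p.2 ∪ {y})
      have := hC p.2
      have := hC (p.2 ∪ {x, y})
      have := hF p.2
      linarith
  · calc smI F Finset.univ 2 ≤ _ :=
          Finset.inf'_le _ (b := ((∅ : Finset V), (∅ : Finset V))) (by simp)
      _ ≤ 2 * F C := by simp; linarith [hF C]
end

section
/- Degradation of single-element marginal gains controlled by the submodularity index (Lemma 2 of the paper): let F : Finset V → ℝ be a set function on a finite set V, let A ⊆ B ⊆ V with |B \ A| = M, and let x ∈ V \ B. Then F_x(A) − F_x(B) ≥ M · λ_F(B, 2). -/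
open Finset

variable {V : Type*} [Fintype V] [DecidableEq V]

lemma smI_le_pair (F : Finset V → ℝ) (B A : Finset V) (hA : A ⊆ B)
    (x y : V) (hx : x ∉ A) (hy : y ∉ A) (hxy : x ≠ y) :
    smI F B 2 ≤ (F (A ∪ {x}) - F A) - (F ((A ∪ {y}) ∪ {x}) - F (A ∪ {y})) := by
  have hmem : (({x, y}, A) : Finset V × Finset V) ∈
      (Finset.univ.filter (fun p : Finset V × Finset V =>
        p.2 ⊆ B ∧ p.1 ∩ p.2 = ∅ ∧ p.1.card ≤ 2)) := by
    simp only [mem_filter, mem_univ, true_and]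
    refine ⟨hA, ?_, ?_⟩
    · rw [Finset.eq_empty_iff_forall_notMem]
      intro z hz
      simp only [mem_inter, mem_insert, mem_singleton] at hz
      rcases hz.1 with h | h <;> subst h
      · exact hx hz.2
      · exact hy hz.2
    · exact (Finset.card_insert_le _ _).trans (by simp)
  have h := Finset.inf'_le (b := (({x, y}, A) : Finset V × Finset V))
    (f := fun p : Finset V × Finset V =>
      (∑ z ∈ p.1, (F (p.2 ∪ {z}) - F p.2)) - (F (p.2 ∪ p.1) - F p.2)) hmem
  rw [Finset.sum_pair hxy] at h
  have hU : A ∪ {x, y} = (A ∪ {y}) ∪ {x} := by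
    ext z; simp [or_comm, or_assoc, or_left_comm]
  rw [hU] at h
  calc smI F B 2 ≤ _ := h
    _ = _ := by ring

/-- Degradation of single-element marginal gains controlled by the submodularity index
(Lemma 2): if `A ⊆ B ⊆ V`, `|B \ A| = M`, and `x ∈ V \ B`, then
`F_x(A) − F_x(B) ≥ M · λ_F(B, 2)`. -/
theorem marginal_gain_degradation (F : Finset V → ℝ)
    (A B : Finset V) (hAB : A ⊆ B) (M : ℕ) (hM : (B \ A).card = M)
    (x : V) (hx : x ∉ B) :
    (F (A ∪ {x}) - F A) - (F (B ∪ {x}) - F B) ≥ (M : ℝ) * smI F B 2 := by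
  induction M generalizing A with
  | zero =>
    have : B \ A = ∅ := Finset.card_eq_zero.mp hM
    have hBA : B ⊆ A := Finset.sdiff_eq_empty_iff_subset.mp this
    have : A = B := Finset.Subset.antisymm hAB hBA
    subst this
    simp
  | succ n ih =>
    have hne : (B \ A).Nonempty := by
      rw [← Finset.card_pos, hM]; omega
    obtain ⟨y, hy⟩ := hne
    have hyB : y ∈ B := (Finset.mem_sdiff.mp hy).1
    have hyA : y ∉ A := (Finset.mem_sdiff.mp hy).2
    have hA' : A ∪ {y} ⊆ B := Finset.union_subset hAB (by simpa using hyB)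
    have hcard : (B \ (A ∪ {y})).card = n := by
      have : B \ (A ∪ {y}) = (B \ A).erase y := by
        ext z; simp [Finset.mem_sdiff, not_or]; tauto
      rw [this, Finset.card_erase_of_mem hy, hM]; omega
    have h1 := ih (A ∪ {y}) hA' hcard
    have hxA : x ∉ A := fun h => hx (hAB h)
    have hxy : x ≠ y := fun h => hx (h ▸ hyB)
    have h2 := smI_le_pair F B A hAB x y hxA hyA hxy
    push_cast
    linarith
end

section
/- Approximate diminishing returns for set augmentations (Lemma 3 of the paper): let F : Finset V → ℝ be a set function on a finite set V, let A ⊆ B ⊆ V, and let Y ⊆ V with Y ∩ B = ∅. Then F(A ∪ Y) − F(A) ≥ F(B ∪ Y) − F(B) + |B \ A| · |Y| · λ_F(B ∪ Y, 2). -/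
open Finset

variable {V : Type*} [Fintype V] [DecidableEq V]

lemma smI_le (F : Finset V → ℝ) (L S A : Finset V)
    (hA : A ⊆ L) (hSA : S ∩ A = ∅) (hS : S.card ≤ 2) :
    smI F L 2 ≤ (∑ x ∈ S, (F (A ∪ {x}) - F A)) - (F (A ∪ S) - F A) := by
  have hmem : (S, A) ∈ (Finset.univ.filter (fun p : Finset V × Finset V =>
      p.2 ⊆ L ∧ p.1 ∩ p.2 = ∅ ∧ p.1.card ≤ 2)) := by
    simp only [Finset.mem_filter, Finset.mem_univ, true_and]
    exact ⟨hA, hSA, hS⟩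
  have h := Finset.inf'_le
    (f := fun p : Finset V × Finset V =>
      (∑ x ∈ p.1, (F (p.2 ∪ {x}) - F p.2)) - (F (p.2 ∪ p.1) - F p.2)) hmem
  exact h

lemma pair_ineq (F : Finset V → ℝ) (L A : Finset V) (b y : V)
    (hA : A ⊆ L) (hb : b ∉ A) (hy : y ∉ A) (hby : b ≠ y) :
    F (A ∪ {y} ∪ {b}) - F (A ∪ {y}) ≤ F (A ∪ {b}) - F A - smI F L 2 := by
  have hSA : ({b, y} : Finset V) ∩ A = ∅ := by
    rw [Finset.eq_empty_iff_forall_notMem]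
    intro x hx
    simp only [Finset.mem_inter, Finset.mem_insert, Finset.mem_singleton] at hx
    rcases hx.1 with h | h <;> subst h
    · exact hb hx.2
    · exact hy hx.2
  have h := smI_le F L {b, y} A hA hSA (by rw [Finset.card_pair hby])
  rw [Finset.sum_pair hby] at h
  have e1 : A ∪ {b, y} = A ∪ {y} ∪ {b} := by
    ext x; simp only [Finset.mem_union, Finset.mem_insert, Finset.mem_singleton]; tauto
  rw [e1] at h
  linarith

lemma step1 (F : Finset V → ℝ) (L A : Finset V) (b : V)
    (hA : A ⊆ L) (hb : b ∉ A) :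
    ∀ Y : Finset V, Y ⊆ L → Disjoint A Y → b ∉ Y →
      F (A ∪ Y ∪ {b}) - F (A ∪ Y) ≤
        F (A ∪ {b}) - F A - (Y.card : ℝ) * smI F L 2 := by
  intro Y
  induction Y using Finset.induction_on with
  | empty => simp
  | @insert y s hys ih =>
    intro hYL hAY hbY
    have hsL : s ⊆ L := (Finset.subset_insert _ _).trans hYL
    have hAs : Disjoint A s := hAY.mono_right (Finset.subset_insert _ _)
    have hbs : b ∉ s := fun h => hbY (Finset.mem_insert_of_mem h)
    have ihs := ih hsL hAs hbs
    have hyAs : y ∉ A ∪ s := by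
      simp only [Finset.mem_union]
      rintro (h | h)
      · exact (Finset.disjoint_left.mp hAY) h (Finset.mem_insert_self _ _)
      · exact hys h
    have hbAs : b ∉ A ∪ s := by
      simp only [Finset.mem_union]
      rintro (h | h)
      · exact hb h
      · exact hbs h
    have hby : b ≠ y := fun h => hbY (h ▸ Finset.mem_insert_self _ _)
    have hAsL : A ∪ s ⊆ L := Finset.union_subset hA hsL
    have hp := pair_ineq F L (A ∪ s) b y hAsL hbAs
      (fun h => hyAs (by simpa using h)) hby
    have e1 : A ∪ insert y s = A ∪ s ∪ {y} := by
      ext x; simp only [Finset.mem_union, Finset.mem_insert, Finset.mem_singleton]; tauto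
    have e2 : A ∪ s ∪ {b} = A ∪ s ∪ {b} := rfl
    rw [e1]
    rw [Finset.card_insert_of_notMem hys]
    push_cast
    linarith

lemma step2 (F : Finset V → ℝ) (L A Y : Finset V)
    (hA : A ⊆ L) (hY : Y ⊆ L) (hAY : Disjoint A Y) :
    ∀ D : Finset V, D ⊆ L → Disjoint D A → Disjoint D Y →
      F (A ∪ D ∪ Y) - F (A ∪ D) ≤
        F (A ∪ Y) - F A - (D.card : ℝ) * (Y.card : ℝ) * smI F L 2 := by
  intro D
  induction D using Finset.induction_on with
  | empty => simp
  | @insert b s hbs ih =>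
    intro hDL hDA hDY
    have hsL : s ⊆ L := (Finset.subset_insert _ _).trans hDL
    have hsA : Disjoint s A := hDA.mono_left (Finset.subset_insert _ _)
    have hsY : Disjoint s Y := hDY.mono_left (Finset.subset_insert _ _)
    have ihs := ih hsL hsA hsY
    have hbA : b ∉ A := Finset.disjoint_left.mp hDA (Finset.mem_insert_self _ _)
    have hbY : b ∉ Y := Finset.disjoint_left.mp hDY (Finset.mem_insert_self _ _)
    have hbAs : b ∉ A ∪ s := by
      simp only [Finset.mem_union]
      rintro (h | h)
      · exact hbA h
      · exact hbs h
    have hAsL : A ∪ s ⊆ L := Finset.union_subset hA hsL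
    have hAsY : Disjoint (A ∪ s) Y := Finset.disjoint_union_left.mpr ⟨hAY, hsY⟩
    have hs1 := step1 F L (A ∪ s) b hAsL hbAs Y hY hAsY hbY
    have e1 : A ∪ insert b s = A ∪ s ∪ {b} := by
      ext x; simp only [Finset.mem_union, Finset.mem_insert, Finset.mem_singleton]; tauto
    have e2 : A ∪ s ∪ {b} ∪ Y = A ∪ s ∪ Y ∪ {b} := by
      ext x; simp only [Finset.mem_union, Finset.mem_insert, Finset.mem_singleton]; tauto
    rw [e1, e2, Finset.card_insert_of_notMem hbs]
    push_cast
    nlinarith [hs1, ihs]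

/-- Approximate diminishing returns for set augmentations (Lemma 3): if `A ⊆ B ⊆ V`
and `Y ⊆ V` with `Y ∩ B = ∅`, then
`F(A ∪ Y) − F(A) ≥ F(B ∪ Y) − F(B) + |B \ A| · |Y| · λ_F(B ∪ Y, 2)`. -/
theorem approx_diminishing_returns (F : Finset V → ℝ)
    (A B Y : Finset V) (hAB : A ⊆ B) (hYB : Y ∩ B = ∅) :
    F (A ∪ Y) - F A ≥
      F (B ∪ Y) - F B + ((B \ A).card : ℝ) * (Y.card : ℝ) * smI F (B ∪ Y) 2 := by
  have hYBdisj : Disjoint Y B := Finset.disjoint_iff_inter_eq_empty.mpr hYB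
  have hAY : Disjoint A Y := (hYBdisj.mono_right hAB).symm
  have h := step2 F (B ∪ Y) A Y
    (hAB.trans (Finset.subset_union_left))
    (Finset.subset_union_right) hAY (B \ A)
    ((Finset.sdiff_subset).trans (Finset.subset_union_left))
    (Finset.sdiff_disjoint)
    ((hYBdisj.mono_right (Finset.sdiff_subset)).symm)
  have e1 : A ∪ (B \ A) = B := Finset.union_sdiff_of_subset hAB
  rw [e1] at h
  linarith
end

section
/- Value of a local optimum against its supersets (Lemma 4, second inequality): let F : Finset V → ℝ be a set function on a finite set V and let S ⊆ V be a local optimum of F. Then for every set J with S ⊆ J ⊆ V, F(J) ≤ F(S) − C(|J \ S|, 2) · λ_F(J, 2), where C(n, 2) = n(n−1)/2 denotes the binomial coefficient. -/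
open Finset

variable {V : Type*} [Fintype V] [DecidableEq V]

/-- A set `S ⊆ V` is a local optimum of `F` if `F(S) ≥ F(S \ {a})` for every `a ∈ S`
and `F(S) ≥ F(S ∪ {a})` for every `a ∉ S`. -/
def IsLocalOptimum (F : Finset V → ℝ) (S : Finset V) : Prop :=
  (∀ a ∈ S, F (S \ {a}) ≤ F S) ∧ (∀ a ∉ S, F (S ∪ {a}) ≤ F S)

lemma smI_le_aux (F : Finset V → ℝ) (L : Finset V) (T A : Finset V)
    (hA : A ⊆ L) (hTA : T ∩ A = ∅) (hT : T.card ≤ 2) :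
    smI F L 2 ≤ (∑ x ∈ T, (F (A ∪ {x}) - F A)) - (F (A ∪ T) - F A) := by
  have hmem : (T, A) ∈ Finset.univ.filter (fun p : Finset V × Finset V =>
      p.2 ⊆ L ∧ p.1 ∩ p.2 = ∅ ∧ p.1.card ≤ 2) := by
    simp only [mem_filter, mem_univ, true_and]
    exact ⟨hA, hTA, hT⟩
  exact Finset.inf'_le _ hmem

lemma pairstep (F : Finset V → ℝ) (L A : Finset V) (x y : V)
    (hA : A ⊆ L) (hx : x ∉ A) (hy : y ∉ A) (hxy : x ≠ y) :
    F (A ∪ {x} ∪ {y}) - F (A ∪ {y}) ≤ F (A ∪ {x}) - F A - smI F L 2 := by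
  have h := smI_le_aux F L {x, y} A hA (by
      ext a; simp only [mem_inter, mem_insert, mem_singleton, notMem_empty, iff_false]
      rintro ⟨h1 | h1, h2⟩ <;> subst h1 <;> [exact hx h2; exact hy h2])
    (by simpa using card_insert_le x {y})
  rw [Finset.sum_pair hxy] at h
  have : A ∪ {x} ∪ {y} = A ∪ {x, y} := by
    ext a; simp only [mem_union, mem_singleton, mem_insert]; tauto
  rw [this]
  linarith

lemma marg (F : Finset V → ℝ) (L : Finset V) (x : V) :
    ∀ n (A S : Finset V), S ⊆ A → A ⊆ L → x ∉ A → (A \ S).card = n →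
      F (A ∪ {x}) - F A ≤ F (S ∪ {x}) - F S - n * smI F L 2 := by
  intro n
  induction n with
  | zero =>
    intro A S hSA hAL hx hcard
    have : A = S := by
      have h : A \ S = ∅ := card_eq_zero.mp hcard
      apply Subset.antisymm _ hSA
      intro a ha
      by_contra hn
      exact absurd (mem_sdiff.mpr ⟨ha, hn⟩) (by simp [h])
    subst this; simp
  | succ n ih =>
    intro A S hSA hAL hx hcard
    obtain ⟨y, hy⟩ : ∃ y, y ∈ A \ S := card_pos.mp (by omega) |>.imp fun _ h => h
    rw [mem_sdiff] at hy
    set A' := A.erase y with hA'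
    have hyA : y ∈ A := hy.1
    have hSA' : S ⊆ A' := fun a ha => mem_erase.mpr ⟨fun h => hy.2 (h ▸ ha), hSA ha⟩
    have hA'L : A' ⊆ L := (erase_subset _ _).trans hAL
    have hxA' : x ∉ A' := fun h => hx (erase_subset _ _ h)
    have hyA' : y ∉ A' := notMem_erase _ _
    have hxy : x ≠ y := fun h => hx (h ▸ hyA)
    have hcard' : (A' \ S).card = n := by
      have : A' \ S = (A \ S).erase y := by
        ext a; simp only [hA', mem_sdiff, mem_erase]; tauto
      rw [this, card_erase_of_mem (mem_sdiff.mpr hy)]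
      omega
    have hstep := pairstep F L A' x y hA'L hxA' hyA' hxy
    have h1 : A' ∪ {y} = A := by
      ext a; simp only [hA', mem_union, mem_erase, mem_singleton]
      constructor
      · rintro (⟨_, h⟩ | h); exact h; exact h ▸ hyA
      · intro h; by_cases hay : a = y; exact Or.inr hay; exact Or.inl ⟨hay, h⟩
    have h2 : A' ∪ {x} ∪ {y} = A ∪ {x} := by
      rw [union_right_comm, h1]
    rw [h1, h2] at hstep
    have hih := ih A' S hSA' hA'L hxA' hcard'
    push_cast
    linarith

lemma main_aux (F : Finset V → ℝ) (S : Finset V) (hS : IsLocalOptimum F S)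
    (L : Finset V) :
    ∀ n (J : Finset V), S ⊆ J → J ⊆ L → (J \ S).card = n →
      F J ≤ F S - (n.choose 2 : ℝ) * smI F L 2 := by
  intro n
  induction n with
  | zero =>
    intro J hJ hJL hn
    have : J = S := by
      apply Subset.antisymm _ hJ
      intro a ha
      by_contra hns
      exact absurd (mem_sdiff.mpr ⟨ha, hns⟩) (by simp [card_eq_zero.mp hn])
    subst this; simp
  | succ n ih =>
    intro J hJ hJL hn
    obtain ⟨x, hx⟩ : ∃ x, x ∈ J \ S := card_pos.mp (by omega) |>.imp fun _ h => h
    rw [mem_sdiff] at hx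
    set J' := J.erase x with hJ'
    have hSJ' : S ⊆ J' := fun a ha => mem_erase.mpr ⟨fun h => hx.2 (h ▸ ha), hJ ha⟩
    have hJ'L : J' ⊆ L := (erase_subset _ _).trans hJL
    have hxJ' : x ∉ J' := notMem_erase _ _
    have hcard' : (J' \ S).card = n := by
      have : J' \ S = (J \ S).erase x := by
        ext a; simp only [hJ', mem_sdiff, mem_erase]; tauto
      rw [this, card_erase_of_mem (mem_sdiff.mpr hx)]
      omega
    have hmarg := marg F L x n J' S hSJ' hJ'L hxJ' hcard'
    have h1 : J' ∪ {x} = J := by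
      ext a; simp only [hJ', mem_union, mem_erase, mem_singleton]
      constructor
      · rintro (⟨_, h⟩ | h); exact h; exact h ▸ hx.1
      · intro h; by_cases hax : a = x; exact Or.inr hax; exact Or.inl ⟨hax, h⟩
    rw [h1] at hmarg
    have hloc := hS.2 x hx.2
    have hih := ih J' hSJ' hJ'L hcard'
    have hch : ((n+1).choose 2 : ℝ) = (n.choose 2 : ℝ) + n := by
      rw [Nat.choose_succ_succ]
      push_cast [Nat.choose_one_right]
      ring
    rw [hch]
    linarith

/-- Value of a local optimum against its supersets (Lemma 4, second inequality):
if `S` is a local optimum of `F`, then for every `J` with `S ⊆ J ⊆ V`,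
`F(J) ≤ F(S) − C(|J \ S|, 2) · λ_F(J, 2)`. -/
theorem local_optimum_superset_bound (F : Finset V → ℝ)
    (S : Finset V) (hS : IsLocalOptimum F S)
    (J : Finset V) (hJ : S ⊆ J) :
    F J ≤ F S - ((J \ S).card.choose 2 : ℝ) * smI F J 2 :=
  main_aux F S hS J _ J hJ (Subset.refl J) rfl
end

section
/- The paper's counterexample showing the attack objective need not be submodular: let V = {1, 2} and define F : Finset V → ℝ by F(S) = f(x + ε·∑_{i ∈ S} e_i − ε·∑_{i ∉ S} e_i), where f(z) = −log(1/(1 + exp(−⟨w, z⟩))) with w = (−1, −1), ε = 1, and x = (0, 0) (equivalently, F(S) = log(1 + exp(2|S| − 2))). Then the marginal gain of the element 2 at the empty set is strictly smaller than at {1}; that is, F({2}) − F(∅) < F({1, 2}) − F({1}), i.e., log 2 − log(1 + e^{−2}) < log(1 + e^{2}) − log 2. In particular, F is not submodular. -/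
open Finset

/-- `f(z) = −log(1/(1 + e^{−⟨w, z⟩}))` with `w = (−1, −1)`. -/
noncomputable def fCounter (z : Fin 2 → ℝ) : ℝ :=
  -Real.log (1 / (1 + Real.exp (-(∑ i, (![(-1 : ℝ), -1]) i * z i))))

/-- `F(S) = f(x + ε ∑_{i ∈ S} e_i − ε ∑_{i ∉ S} e_i)` with `ε = 1` and `x = (0, 0)`:
coordinate `i` of the perturbed point is `+1` if `i ∈ S` and `−1` otherwise. -/
noncomputable def FCounter (S : Finset (Fin 2)) : ℝ :=
  fCounter (fun i => (![(0 : ℝ), 0]) i + (if i ∈ S then (1 : ℝ) else -1))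

/-- `F` is submodular if for all `A ⊆ B ⊆ V` and `e ∈ V \ B`,
`Δ(e | A) ≥ Δ(e | B)` where `Δ(e | S) = F(S ∪ {e}) − F(S)`. -/
def Submodular {V : Type*} [DecidableEq V] (F : Finset V → ℝ) : Prop :=
  ∀ A B : Finset V, A ⊆ B → ∀ e ∉ B,
    F (B ∪ {e}) - F B ≤ F (A ∪ {e}) - F A

lemma FCounter_eq (S : Finset (Fin 2)) :
    FCounter S = Real.log (1 + Real.exp
      ((if (0 : Fin 2) ∈ S then (1:ℝ) else -1) + (if (1 : Fin 2) ∈ S then (1:ℝ) else -1))) := by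
  have h : (0:ℝ) < 1 + Real.exp
      ((if (0 : Fin 2) ∈ S then (1:ℝ) else -1) + (if (1 : Fin 2) ∈ S then (1:ℝ) else -1)) := by
    positivity
  simp only [FCounter, fCounter, Fin.sum_univ_two, one_div, Real.log_inv, neg_neg,
    Matrix.cons_val_zero, Matrix.cons_val_one, Matrix.head_cons]
  ring_nf

/-- The paper's counterexample: with `V = {1, 2}` (encoded as `Fin 2`, the paper's
element `1` being `0` and element `2` being `1`), the marginal gain of element `2`
at `∅` is strictly smaller than at `{1}`; in particular, `F` is not submodular. -/
theorem counterexample_not_submodular :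
    FCounter {1} - FCounter ∅ < FCounter {0, 1} - FCounter {0} ∧
      ¬ Submodular FCounter := by
  have h0 : FCounter ∅ = Real.log (1 + Real.exp (-2)) := by
    rw [FCounter_eq]; norm_num
  have h1 : FCounter {1} = Real.log 2 := by
    rw [FCounter_eq]; norm_num
  have h2 : FCounter {0} = Real.log 2 := by
    rw [FCounter_eq]; norm_num
  have h3 : FCounter {0, 1} = Real.log (1 + Real.exp 2) := by
    rw [FCounter_eq]; norm_num
  have key : FCounter {1} - FCounter ∅ < FCounter {0, 1} - FCounter {0} := by
    rw [h0, h1, h2, h3]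
    have hmul : Real.log 2 + Real.log 2 < Real.log (1 + Real.exp (-2)) + Real.log (1 + Real.exp 2) := by
      have e1 : (0:ℝ) < 1 + Real.exp (-2) := by positivity
      have e2 : (0:ℝ) < 1 + Real.exp 2 := by positivity
      rw [← Real.log_mul (by norm_num) (by norm_num), ← Real.log_mul (by positivity) (by positivity)]
      apply Real.log_lt_log (by norm_num)
      have hid : Real.exp (-2) * Real.exp 2 = 1 := by
        rw [← Real.exp_add]; norm_num
      have hgt : (1:ℝ) < Real.exp 2 := by
        have := Real.add_one_lt_exp (x := 2) (by norm_num); linarith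
      have hp : (0:ℝ) < Real.exp (-2) := Real.exp_pos _
      nlinarith [sq_nonneg (Real.exp 2 - 1), Real.exp_pos (2:ℝ)]
    linarith
  refine ⟨key, fun h => ?_⟩
  have := h ∅ {0} (by simp) 1 (by decide)
  simp only [empty_union] at this
  have heq : ({0} ∪ {1} : Finset (Fin 2)) = {0, 1} := by decide
  rw [heq] at this
  linarith
end
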